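/- The map F : ℝ² → ℝ² defined by F(γ,δ) = ( 1 + 2cos(π(γ+2)/5) + 2cos(π(δ+4)/5), 2 + 2cos(π(γ+2)/5) + 2cos(π(δ+4)/5) + 4cos(π(γ+2)/5)·cos(π(δ+4)/5) ) is injective on the closed triangular region {(γ,δ) ∈ ℝ² : γ ≥ −2, δ ≤ 1, γ − δ ≤ 2}. -/

import Mathlib

/-- Theorem B(iii) injectivity: the map from asymptotic data `(γ, δ)` to Stokes data
`(s₁ᴿ, −s₂ᴿ)` in cases 5c, 5d, 5e is injective on the region
`γ ≥ −2`, `δ ≤ 1`, `γ − δ ≤ 2`. -/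
theorem stokes_injective_case5cde :
    Set.InjOn
      (fun p : ℝ × ℝ =>
        ((1 + 2 * Real.cos (Real.pi * (p.1 + 2) / 5) + 2 * Real.cos (Real.pi * (p.2 + 4) / 5),
          2 + 2 * Real.cos (Real.pi * (p.1 + 2) / 5) + 2 * Real.cos (Real.pi * (p.2 + 4) / 5) +
            4 * Real.cos (Real.pi * (p.1 + 2) / 5) * Real.cos (Real.pi * (p.2 + 4) / 5)) :
          ℝ × ℝ))
      {p : ℝ × ℝ | -2 ≤ p.1 ∧ p.2 ≤ 1 ∧ p.1 - p.2 ≤ 2} := by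
  have pi_pos := Real.pi_pos
  rintro ⟨g1, d1⟩ ⟨hg1, hd1, hgd1⟩ ⟨g2, d2⟩ ⟨hg2, hd2, hgd2⟩ heq
  simp only [Prod.mk.injEq] at heq
  obtain ⟨e1, e2⟩ := heq
  set u1 := Real.pi * (g1 + 2) / 5 with hu1
  set v1 := Real.pi * (d1 + 4) / 5 with hv1
  set u2 := Real.pi * (g2 + 2) / 5 with hu2
  set v2 := Real.pi * (d2 + 4) / 5 with hv2
  have hu1m : u1 ∈ Set.Icc 0 Real.pi := by
    constructor
    · rw [hu1]; have : (0:ℝ) ≤ g1 + 2 := by linarith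
      positivity
    · rw [hu1]; rw [div_le_iff₀ (by norm_num)]; nlinarith
  have hv1m : v1 ∈ Set.Icc 0 Real.pi := by
    constructor
    · rw [hv1]; have : (0:ℝ) ≤ d1 + 4 := by linarith
      positivity
    · rw [hv1]; rw [div_le_iff₀ (by norm_num)]; nlinarith
  have hu2m : u2 ∈ Set.Icc 0 Real.pi := by
    constructor
    · rw [hu2]; have : (0:ℝ) ≤ g2 + 2 := by linarith
      positivity
    · rw [hu2]; rw [div_le_iff₀ (by norm_num)]; nlinarith
  have hv2m : v2 ∈ Set.Icc 0 Real.pi := by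
    constructor
    · rw [hv2]; have : (0:ℝ) ≤ d2 + 4 := by linarith
      positivity
    · rw [hv2]; rw [div_le_iff₀ (by norm_num)]; nlinarith
  have huv1 : u1 ≤ v1 := by
    rw [hu1, hv1]; apply div_le_div_of_nonneg_right _ (by norm_num)
    nlinarith
  have huv2 : u2 ≤ v2 := by
    rw [hu2, hv2]; apply div_le_div_of_nonneg_right _ (by norm_num)
    nlinarith
  set a := Real.cos u1
  set b := Real.cos v1
  set c := Real.cos u2
  set d := Real.cos v2
  have hab : b ≤ a := Real.cos_le_cos_of_nonneg_of_le_pi hu1m.1 hv1m.2 huv1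
  have hcd : d ≤ c := Real.cos_le_cos_of_nonneg_of_le_pi hu2m.1 hv2m.2 huv2
  have hsum : a + b = c + d := by linarith
  have hprod : a * b = c * d := by linarith
  have hsq : (a - b) ^ 2 = (c - d) ^ 2 := by
    linear_combination (a + b + c + d) * hsum - 4 * hprod
  have hdiff : a - b = c - d := by
    have := (sq_eq_sq₀ (by linarith : (0:ℝ) ≤ a - b) (by linarith : (0:ℝ) ≤ c - d)).mp hsq
    exact this
  have hac : a = c := by linarith
  have hbd : b = d := by linarith
  have h1 : u1 = u2 := Real.injOn_cos hu1m hu2m hac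
  have h2 : v1 = v2 := Real.injOn_cos hv1m hv2m hbd
  have : g1 = g2 := by
    rw [hu1, hu2] at h1
    have := mul_left_cancel₀ (ne_of_gt pi_pos) (by linarith [h1] : Real.pi * (g1 + 2) = Real.pi * (g2 + 2))
    linarith
  have : d1 = d2 := by
    rw [hv1, hv2] at h2
    have := mul_left_cancel₀ (ne_of_gt pi_pos) (by linarith [h2] : Real.pi * (d1 + 4) = Real.pi * (d2 + 4))
    linarith
  simp_all
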